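/- Let g ∈ P_{l,sK} be a Taylor–Fourier polynomial of degree l in the action ψ, and let χ₁ = X(θ,φ) + ξθ with X a trigonometric polynomial and ξ ∈ ℝ. Then for every j ≥ 0, the Lie bracket power satisfies ‖(1/j!) L_{χ₁}^j g‖ ≤ C(l,j) (‖∂_θ X‖ + |ξ|)^j ‖g‖, where C(l,j) is the binomial coefficient l choose j, and L_{χ₁}^j g = 0 for j > l. -/

import Mathlib

open Finset

/-- Convolution product of Fourier coefficient families on the 2-torus. -/
noncomputable def fMul (f g : (ℤ × ℤ) →₀ ℂ) : (ℤ × ℤ) →₀ ℂ :=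
  f.sum fun p a => g.sum fun q b => Finsupp.single (p + q) (a * b)

/-- ℓ¹ norm of the Fourier coefficients. -/
noncomputable def fNorm (f : (ℤ × ℤ) →₀ ℂ) : ℝ :=
  ∑ k ∈ f.support, ‖f k‖

lemma fMul_zero (a : (ℤ × ℤ) →₀ ℂ) : fMul a 0 = 0 := by
  simp [fMul]

lemma fMul_smul (a x : (ℤ × ℤ) →₀ ℂ) (c : ℂ) : fMul a (c • x) = c • fMul a x := by
  unfold fMul
  rw [Finsupp.smul_sum]
  refine Finset.sum_congr rfl fun p _ => ?_
  simp only []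
  rw [Finsupp.sum_smul_index' (by simp), Finsupp.smul_sum]
  refine Finset.sum_congr rfl fun q _ => ?_
  simp only []
  rw [Finsupp.smul_single, smul_eq_mul, smul_eq_mul]
  ring_nf

lemma fNorm_nonneg (f : (ℤ × ℤ) →₀ ℂ) : 0 ≤ fNorm f :=
  Finset.sum_nonneg fun _ _ => norm_nonneg _

lemma fNorm_zero : fNorm 0 = 0 := by simp [fNorm]

lemma fNorm_eq_sum {f : (ℤ × ℤ) →₀ ℂ} {s : Finset (ℤ × ℤ)} (h : f.support ⊆ s) :
    fNorm f = ∑ k ∈ s, ‖f k‖ :=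
  Finset.sum_subset h fun x _ hx => by
    simp [Finsupp.notMem_support_iff.mp hx]

lemma fNorm_add_le (f g : (ℤ × ℤ) →₀ ℂ) : fNorm (f + g) ≤ fNorm f + fNorm g := by
  rw [fNorm_eq_sum (s := f.support ∪ g.support) (Finsupp.support_add),
    fNorm_eq_sum (s := f.support ∪ g.support) Finset.subset_union_left,
    fNorm_eq_sum (s := f.support ∪ g.support) Finset.subset_union_right,
    ← Finset.sum_add_distrib]
  exact Finset.sum_le_sum fun k _ => by simpa using norm_add_le (f k) (g k)

lemma fNorm_smul (c : ℂ) (f : (ℤ × ℤ) →₀ ℂ) : fNorm (c • f) = ‖c‖ * fNorm f := by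
  rw [fNorm_eq_sum (s := f.support) Finsupp.support_smul, fNorm, Finset.mul_sum]
  exact Finset.sum_congr rfl fun k _ => by simp [norm_smul]

lemma fNorm_single (p : ℤ × ℤ) (c : ℂ) : fNorm (Finsupp.single p c) ≤ ‖c‖ := by
  by_cases hc : c = 0
  · simp [fNorm, hc]
  · simp [fNorm, Finsupp.support_single_ne_zero _ hc]

lemma fNorm_sum_le {ι : Type*} (s : Finset ι) (F : ι → (ℤ × ℤ) →₀ ℂ) :
    fNorm (∑ i ∈ s, F i) ≤ ∑ i ∈ s, fNorm (F i) := by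
  classical
  induction s using Finset.cons_induction with
  | empty => simp [fNorm_zero]
  | cons i s hi ih =>
    rw [Finset.sum_cons, Finset.sum_cons]
    exact (fNorm_add_le _ _).trans (by linarith)

lemma fNorm_fMul_le (f g : (ℤ × ℤ) →₀ ℂ) : fNorm (fMul f g) ≤ fNorm f * fNorm g := by
  unfold fMul
  rw [Finsupp.sum]
  simp only [Finsupp.sum]
  calc fNorm (∑ p ∈ f.support, ∑ q ∈ g.support, Finsupp.single (p + q) (f p * g q))
      ≤ ∑ p ∈ f.support, fNorm (∑ q ∈ g.support, Finsupp.single (p + q) (f p * g q)) :=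
        fNorm_sum_le _ _
    _ ≤ ∑ p ∈ f.support, ∑ q ∈ g.support, ‖f p * g q‖ :=
        Finset.sum_le_sum fun p _ => (fNorm_sum_le _ _).trans
          (Finset.sum_le_sum fun q _ => fNorm_single _ _)
    _ = fNorm f * fNorm g := by
        rw [fNorm, fNorm, Finset.sum_mul_sum]
        exact Finset.sum_congr rfl fun p _ => Finset.sum_congr rfl fun q _ => norm_mul _ _

lemma fMul_iter_zero (a : (ℤ × ℤ) →₀ ℂ) (j : ℕ) : (fMul a)^[j] 0 = 0 := by
  induction j with
  | zero => rfl
  | succ j ih => rw [Function.iterate_succ_apply, fMul_zero, ih]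

lemma fNorm_fMul_iter_le (a x : (ℤ × ℤ) →₀ ℂ) (j : ℕ) :
    fNorm ((fMul a)^[j] x) ≤ fNorm a ^ j * fNorm x := by
  induction j generalizing x with
  | zero => simp
  | succ j ih =>
    rw [Function.iterate_succ_apply]
    calc fNorm ((fMul a)^[j] (fMul a x)) ≤ fNorm a ^ j * fNorm (fMul a x) := ih _
      _ ≤ fNorm a ^ j * (fNorm a * fNorm x) := by
          exact mul_le_mul_of_nonneg_left (fNorm_fMul_le _ _) (pow_nonneg (fNorm_nonneg _) _)
      _ = fNorm a ^ (j + 1) * fNorm x := by ring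

/-- The Lie bracket operator `L_{χ₁}` with `χ₁ = X(θ,φ) + ξθ`, acting on a
Taylor–Fourier polynomial `g = Σ_l g_l ψ^l` (here `g : ℕ → coefficients`,
`g l` being the Fourier coefficients of the `ψ^l` part): since `χ₁` does not
depend on `ψ, P`, one has `L_{χ₁} g = (∂_θ X + ξ) ∂_ψ g`. Here `a` stands for
the Fourier coefficients of `∂_θ X + ξ`. -/
noncomputable def lieChi1 (a : (ℤ × ℤ) →₀ ℂ) (g : ℕ → (ℤ × ℤ) →₀ ℂ) :
    ℕ → (ℤ × ℤ) →₀ ℂ :=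
  fun l => ((l + 1 : ℕ) : ℂ) • fMul a (g (l + 1))

lemma fMul_iter_smul (a : (ℤ × ℤ) →₀ ℂ) (c : ℂ) (x : (ℤ × ℤ) →₀ ℂ) (j : ℕ) :
    (fMul a)^[j] (c • x) = c • (fMul a)^[j] x := by
  induction j generalizing x with
  | zero => rfl
  | succ j ih => rw [Function.iterate_succ_apply, fMul_smul, ih,
      Function.iterate_succ_apply]

lemma lieChi1_iter (a : (ℤ × ℤ) →₀ ℂ) (g : ℕ → (ℤ × ℤ) →₀ ℂ) (j m : ℕ) :
    (lieChi1 a)^[j] g m = (((m + j).descFactorial j : ℕ) : ℂ) • (fMul a)^[j] (g (m + j)) := by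
  induction j generalizing g with
  | zero => simp
  | succ j ih =>
    rw [Function.iterate_succ_apply, ih (lieChi1 a g)]
    show _ • (fMul a)^[j] ((((m + j) + 1 : ℕ) : ℂ) • fMul a (g ((m + j) + 1))) = _
    rw [fMul_iter_smul, smul_smul, ← Function.iterate_succ_apply]
    have h1 : m + j + 1 = m + (j + 1) := by ring
    have h2 : (m + j).descFactorial j * (m + j + 1) = (m + (j + 1)).descFactorial (j + 1) := by
      rw [h1.symm, Nat.succ_descFactorial_succ]
      ring
    rw [h1, ← h2]
    congr 1
    push_cast
    ring

/-- Bound for the powers of the Lie bracket generated by `χ₁ = X + ξθ` on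
`g ∈ P_{l,sK}`: `‖(1/j!) L_{χ₁}^j g‖ ≤ C(l,j)(‖∂_θX‖+|ξ|)^j ‖g‖` with
`C(l,j) = l.choose j`, and `L_{χ₁}^j g = 0` for `j > l`. -/
theorem stmt_10 (u : (ℤ × ℤ) →₀ ℂ) (ξ : ℝ) (l : ℕ) (g : ℕ → (ℤ × ℤ) →₀ ℂ)
    (hdeg : ∀ m : ℕ, l < m → g m = 0) :
    (∀ j : ℕ,
      ((1 : ℝ) / (j.factorial : ℝ)) *
          ∑ m ∈ Finset.range (l + 1),
            fNorm ((lieChi1 (u + Finsupp.single 0 (ξ : ℂ)))^[j] g m)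
        ≤ (l.choose j : ℝ) * (fNorm u + |ξ|) ^ j *
            ∑ m ∈ Finset.range (l + 1), fNorm (g m)) ∧
    (∀ j : ℕ, l < j → ∀ m : ℕ,
      (lieChi1 (u + Finsupp.single 0 (ξ : ℂ)))^[j] g m = 0) := by
  set a : (ℤ × ℤ) →₀ ℂ := u + Finsupp.single 0 (ξ : ℂ) with ha
  have hB0 : (0 : ℝ) ≤ fNorm u + |ξ| := add_nonneg (fNorm_nonneg _) (abs_nonneg _)
  have hAB : fNorm a ≤ fNorm u + |ξ| := by
    refine (fNorm_add_le _ _).trans ?_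
    have := fNorm_single (0 : ℤ × ℤ) (ξ : ℂ)
    rw [Complex.norm_real, Real.norm_eq_abs] at this
    linarith
  constructor
  · intro j
    have key : ∀ m : ℕ, m + j ≤ l →
        ((1 : ℝ) / (j.factorial : ℝ)) * fNorm ((lieChi1 a)^[j] g m)
          ≤ (l.choose j : ℝ) * (fNorm u + |ξ|) ^ j * fNorm (g (m + j)) := by
      intro m hm
      rw [lieChi1_iter, fNorm_smul]
      have hd : (‖(((m + j).descFactorial j : ℕ) : ℂ)‖ : ℝ)
          = (j.factorial : ℝ) * ((m + j).choose j : ℝ) := by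
        rw [Complex.norm_natCast, Nat.descFactorial_eq_factorial_mul_choose]
        push_cast; ring
      rw [hd]
      have hfac : (0 : ℝ) < (j.factorial : ℝ) := by positivity
      have h1 : ((1 : ℝ) / (j.factorial : ℝ)) *
          ((j.factorial : ℝ) * ((m + j).choose j : ℝ) * fNorm ((fMul a)^[j] (g (m + j))))
          = ((m + j).choose j : ℝ) * fNorm ((fMul a)^[j] (g (m + j))) := by
        field_simp
      rw [h1]
      have h2 : fNorm ((fMul a)^[j] (g (m + j))) ≤ (fNorm u + |ξ|) ^ j * fNorm (g (m + j)) :=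
        (fNorm_fMul_iter_le _ _ _).trans
          (mul_le_mul_of_nonneg_right (pow_le_pow_left₀ (fNorm_nonneg _) hAB _)
            (fNorm_nonneg _))
      have h3 : ((m + j).choose j : ℝ) ≤ (l.choose j : ℝ) := by
        exact_mod_cast Nat.choose_le_choose j hm
      calc ((m + j).choose j : ℝ) * fNorm ((fMul a)^[j] (g (m + j)))
          ≤ ((m + j).choose j : ℝ) * ((fNorm u + |ξ|) ^ j * fNorm (g (m + j))) :=
            mul_le_mul_of_nonneg_left h2 (by positivity)
        _ ≤ (l.choose j : ℝ) * ((fNorm u + |ξ|) ^ j * fNorm (g (m + j))) :=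
            mul_le_mul_of_nonneg_right h3
              (mul_nonneg (pow_nonneg hB0 _) (fNorm_nonneg _))
        _ = (l.choose j : ℝ) * (fNorm u + |ξ|) ^ j * fNorm (g (m + j)) := by ring
    have keyall : ∀ m : ℕ,
        ((1 : ℝ) / (j.factorial : ℝ)) * fNorm ((lieChi1 a)^[j] g m)
          ≤ (l.choose j : ℝ) * (fNorm u + |ξ|) ^ j * fNorm (g (m + j)) := by
      intro m
      by_cases hm : m + j ≤ l
      · exact key m hm
      · rw [lieChi1_iter, hdeg (m + j) (lt_of_not_ge hm), fMul_iter_zero, smul_zero,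
          fNorm_zero, mul_zero, mul_zero]
    have hshift : ∑ m ∈ Finset.range (l + 1), fNorm (g (m + j))
        ≤ ∑ m ∈ Finset.range (l + 1), fNorm (g m) := by
      calc ∑ m ∈ Finset.range (l + 1), fNorm (g (m + j))
          = ∑ k ∈ Finset.Ico j (j + (l + 1)), fNorm (g k) := by
            rw [Finset.sum_Ico_eq_sum_range]
            simp [add_comm]
        _ ≤ ∑ k ∈ Finset.range (j + (l + 1)), fNorm (g k) := by
            refine Finset.sum_le_sum_of_subset_of_nonneg ?_ fun _ _ _ => fNorm_nonneg _
            intro k hk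
            rw [Finset.mem_Ico] at hk
            exact Finset.mem_range.mpr hk.2
        _ = ∑ k ∈ Finset.Ico 0 (l + 1), fNorm (g k)
            + ∑ k ∈ Finset.Ico (l + 1) (j + (l + 1)), fNorm (g k) := by
            rw [Finset.sum_Ico_consecutive _ (Nat.zero_le _) (Nat.le_add_left _ _),
              Finset.range_eq_Ico]
        _ = ∑ k ∈ Finset.range (l + 1), fNorm (g k) := by
            have hz : ∑ k ∈ Finset.Ico (l + 1) (j + (l + 1)), fNorm (g k) = 0 :=
              Finset.sum_eq_zero fun k hk => by
                rw [hdeg k (by have := (Finset.mem_Ico.mp hk).1; omega), fNorm_zero]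
            rw [hz, add_zero, Finset.range_eq_Ico]
    calc ((1 : ℝ) / (j.factorial : ℝ)) *
        ∑ m ∈ Finset.range (l + 1), fNorm ((lieChi1 a)^[j] g m)
        = ∑ m ∈ Finset.range (l + 1),
            ((1 : ℝ) / (j.factorial : ℝ)) * fNorm ((lieChi1 a)^[j] g m) := by
          rw [Finset.mul_sum]
      _ ≤ ∑ m ∈ Finset.range (l + 1),
            (l.choose j : ℝ) * (fNorm u + |ξ|) ^ j * fNorm (g (m + j)) :=
          Finset.sum_le_sum fun m _ => keyall m
      _ = (l.choose j : ℝ) * (fNorm u + |ξ|) ^ j *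
            ∑ m ∈ Finset.range (l + 1), fNorm (g (m + j)) := by
          rw [Finset.mul_sum]
      _ ≤ (l.choose j : ℝ) * (fNorm u + |ξ|) ^ j *
            ∑ m ∈ Finset.range (l + 1), fNorm (g m) :=
          mul_le_mul_of_nonneg_left hshift
            (mul_nonneg (Nat.cast_nonneg _) (pow_nonneg hB0 _))
  · intro j hj m
    rw [lieChi1_iter, hdeg (m + j) (lt_of_lt_of_le hj (Nat.le_add_left _ _)),
      fMul_iter_zero, smul_zero]
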